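/- Fourth-order commutation identity: if the connection ∇̂ on TM is torsion-free, then for all smooth vector fields a, b, c, d on M, one has the equality of operators on C∞(E): ∇^4_{(a⊗b − b⊗a)⊗(c⊗d − d⊗c)} = R^E_{a,b} ∘ R^E_{c,d} − R^E_{R^{TM}_{a,b}(c⊗d)}, where R^{TM}_{a,b} acts on c⊗d as a derivation (R^{TM}_{a,b}(c⊗d) = (R^{TM}_{a,b}c)⊗d + c⊗(R^{TM}_{a,b}d)) and R^E_{u⊗v} denotes R^E_{u,v} extended linearly in u⊗v. -/
import Mathlib


/-!
Algebraic framework for manifolds with connection: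
`R` plays the role of the ring of smooth functions `C^∞(M)`,
`V` the `C^∞(M)`-module of smooth vector fields `C^∞(TM)`,
`VFAct` the action of vector fields on functions as derivations,
`Conn` a connection (covariant derivative) on the module of sections `E`
of a vector bundle, and `hcd` the higher covariant derivative defined
inductively by
`∇^{j+1}_{X₀,…,X_j} α = ∇_{X₀}(∇^j_{X₁,…,X_j} α) − Σ_k ∇^j_{X₁,…,∇̂_{X₀}X_k,…,X_j} α`.
-/

open TensorProduct

/-- The action of vector fields on smooth functions as (ℝ-linear) derivations. -/
structure VFAct (R : Type*) [CommRing R] [Algebra ℝ R]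
    (V : Type*) [AddCommGroup V] [Module R V] where
  act : V → R → R
  act_add_right : ∀ X f g, act X (f + g) = act X f + act X g
  act_mul_right : ∀ X f g, act X (f * g) = act X f * g + f * act X g
  act_add_left : ∀ X Y f, act (X + Y) f = act X f + act Y f
  act_smul_left : ∀ (f : R) X g, act (f • X) g = f * act X g
  act_algebraMap : ∀ X (r : ℝ), act X (algebraMap ℝ R r) = 0

/-- A connection (covariant derivative) on the `R = C^∞(M)`-module `E` of sections of a
smooth vector bundle, relative to the action `D` of vector fields on functions. -/
structure Conn (R : Type*) [CommRing R] [Algebra ℝ R]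
    (V : Type*) [AddCommGroup V] [Module R V]
    (E : Type*) [AddCommGroup E] [Module R E]
    (D : VFAct R V) where
  d : V → E → E
  d_add_right : ∀ X α β, d X (α + β) = d X α + d X β
  d_smul_right : ∀ X (f : R) α, d X (f • α) = D.act X f • α + f • d X α
  d_add_left : ∀ X Y α, d (X + Y) α = d X α + d Y α
  d_smul_left : ∀ (f : R) X α, d (f • X) α = f • d X α

variable {R : Type*} [CommRing R] [Algebra ℝ R]
variable {V : Type*} [AddCommGroup V] [Module R V]

/-- The higher covariant derivative `∇^j_{X₁,…,X_j}` along a tuple of vector fields,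
defined inductively by
`∇^{j+1}_{X₀,…,X_j} α = ∇_{X₀}(∇^j_{X₁,…,X_j} α) − Σ_k ∇^j_{X₁,…,∇̂_{X₀}X_k,…,X_j} α`. -/
def hcd {E : Type*} [AddCommGroup E] [Module R E] {D : VFAct R V}
    (cT : Conn R V V D) (cE : Conn R V E D) : (j : ℕ) → (Fin j → V) → E → E
  | 0, _, α => α
  | j + 1, X, α =>
      cE.d (X 0) (hcd cT cE j (fun k => X k.succ) α)
        - ∑ k : Fin j,
            hcd cT cE j (Function.update (fun m => X m.succ) k (cT.d (X 0) (X k.succ))) α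

/-- The connection `∇̂` is torsion-free: `∇̂_X Y − ∇̂_Y X = [X,Y]`, where the Lie bracket
is characterized by its action on functions. -/
def TorsionFree {D : VFAct R V} (cT : Conn R V V D) : Prop :=
  ∀ X Y f, D.act (cT.d X Y - cT.d Y X) f = D.act X (D.act Y f) - D.act Y (D.act X f)

/-- The curvature operator `R^E_{X,Y} = ∇²_{X,Y} − ∇²_{Y,X}` on `C^∞(E)`. -/
def curv {R : Type*} [CommRing R] [Algebra ℝ R]
    {V : Type*} [AddCommGroup V] [Module R V]
    {E : Type*} [AddCommGroup E] [Module R E] {D : VFAct R V}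
    (cT : Conn R V V D) (cE : Conn R V E D) (X Y : V) (α : E) : E :=
  hcd cT cE 2 ![X, Y] α - hcd cT cE 2 ![Y, X] α

set_option linter.unusedSectionVars false
section Helpers
variable {E : Type*} [AddCommGroup E] [Module R E] {D : VFAct R V}
  (cT : Conn R V V D) (cE : Conn R V E D)

lemma d_sub_right (X : V) (α β : E) : cE.d X (α - β) = cE.d X α - cE.d X β := by
  have h := cE.d_add_right X (α - β) β
  rw [sub_add_cancel] at h
  rw [h]; abel

lemma d_sub_left (X Y : V) (α : E) : cE.d (X - Y) α = cE.d X α - cE.d Y α := by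
  have h := cE.d_add_left (X - Y) Y α
  rw [sub_add_cancel] at h
  rw [h]; abel

lemma hcd2 (x y : V) (α : E) :
    hcd cT cE 2 ![x, y] α = cE.d x (cE.d y α) - cE.d (cT.d x y) α := by
  simp (config := { decide := true }) [hcd, Fin.sum_univ_succ, Function.update]

lemma tail3 (x y z : V) : (fun k : Fin 2 => (![x, y, z] : Fin 3 → V) k.succ) = ![y, z] := by
  funext k; fin_cases k <;> rfl

lemma tail4 (w x y z : V) : (fun k : Fin 3 => (![w, x, y, z] : Fin 4 → V) k.succ) = ![x, y, z] := by
  funext k; fin_cases k <;> rfl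

lemma upd20 (y z v : V) : Function.update (![y, z] : Fin 2 → V) 0 v = ![v, z] := by
  funext k; fin_cases k <;> simp [Function.update]

lemma upd21 (y z v : V) : Function.update (![y, z] : Fin 2 → V) 1 v = ![y, v] := by
  funext k; fin_cases k <;> simp [Function.update]

lemma upd30 (x y z v : V) : Function.update (![x, y, z] : Fin 3 → V) 0 v = ![v, y, z] := by
  funext k; fin_cases k <;> simp [Function.update]

lemma upd31 (x y z v : V) : Function.update (![x, y, z] : Fin 3 → V) 1 v = ![x, v, z] := by
  funext k; fin_cases k <;> simp [Function.update]

lemma upd32 (x y z v : V) : Function.update (![x, y, z] : Fin 3 → V) 2 v = ![x, y, v] := by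
  funext k; fin_cases k <;> simp [Function.update]

lemma hcd3 (x y z : V) (α : E) :
    hcd cT cE 3 ![x, y, z] α =
      cE.d x (hcd cT cE 2 ![y, z] α)
        - hcd cT cE 2 ![cT.d x y, z] α - hcd cT cE 2 ![y, cT.d x z] α := by
  show cE.d ((![x,y,z] : Fin 3 → V) 0) _ - _ = _
  rw [Fin.sum_univ_two]
  simp only [tail3, Matrix.cons_val_zero, Matrix.cons_val_one, Matrix.head_cons,
    Fin.succ_zero_eq_one, Fin.succ_one_eq_two, Matrix.cons_val_two, Matrix.tail_cons,
    upd20, upd21]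
  abel

lemma hcd4 (w x y z : V) (α : E) :
    hcd cT cE 4 ![w, x, y, z] α =
      cE.d w (hcd cT cE 3 ![x, y, z] α)
        - hcd cT cE 3 ![cT.d w x, y, z] α
        - hcd cT cE 3 ![x, cT.d w y, z] α
        - hcd cT cE 3 ![x, y, cT.d w z] α := by
  show cE.d ((![w,x,y,z] : Fin 4 → V) 0) _ - _ = _
  rw [Fin.sum_univ_three]
  simp only [tail4, Matrix.cons_val_zero, Matrix.cons_val_one, Matrix.head_cons,
    Fin.succ_zero_eq_one, Fin.succ_one_eq_two, Matrix.cons_val_two, Matrix.tail_cons,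
    upd30, upd31, upd32]
  abel

end Helpers

/-- Fourth-order commutation identity.  If `∇̂` is torsion-free then
for all vector fields `a b c d`:
`∇^4_{(a⊗b − b⊗a) ⊗ (c⊗d − d⊗c)} = R^E_{a,b} ∘ R^E_{c,d} − R^E_{R^{TM}_{a,b}(c⊗d)}`,
where the left-hand side is expanded by linearity as the signed sum of the four
higher covariant derivatives, `R^{TM}_{a,b}` acts on `c ⊗ d` as a derivation, and
`R^E_{u⊗v} = R^E_{u,v}` extended linearly, so the last term is
`R^E_{R^{TM}_{a,b}c, d} + R^E_{c, R^{TM}_{a,b}d}`. -/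
theorem statement9
    {R : Type*} [CommRing R] [Algebra ℝ R]
    {V : Type*} [AddCommGroup V] [Module R V]
    {E : Type*} [AddCommGroup E] [Module R E]
    {D : VFAct R V} (cT : Conn R V V D) (cE : Conn R V E D)
    (htf : TorsionFree cT) :
    ∀ (a b c d : V) (α : E),
      hcd cT cE 4 ![a, b, c, d] α - hcd cT cE 4 ![b, a, c, d] α
          - hcd cT cE 4 ![a, b, d, c] α + hcd cT cE 4 ![b, a, d, c] α =
        curv cT cE a b (curv cT cE c d α)
          - curv cT cE (curv cT cT a b c) d α
          - curv cT cE c (curv cT cT a b d) α := by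
  intro a b c d α
  simp only [curv, hcd4, hcd3, hcd2, d_sub_right, d_sub_left]
  abel
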